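/- The shape ρ = (2n+k−1, 2n+k−3, ..., k+3, k−3, 2, 2) (with k ≥ 5, n ≥ 2) has exactly 6 special rim hook tabloids whose first n−1 rim hooks can be the first n−1 rows; in any special rim hook tabloid T of shape ρ whose content λ satisfies λ_i = ρ_i for i = 1,...,n−1, the remaining rim hooks fill the top three rows (of lengths k−3, 2, 2) in one of exactly 6 ways, with contents (k−1,2), (k−1,1,1), (k−2,3), (k−2,2,1), (k−3,3,1), (k−3,2,2) and heights 3, 2, 2, 1, 1, 0 respectively. -/

import Mathlib

/-- Result of removing from the weakly decreasing list `l` (rows of a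
Ferrers diagram, largest first) the special rim hook whose lowest row is the
last row and whose topmost row is row `r` (0-indexed). -/
def srhtStep (l : List ℕ) (r : ℕ) : List ℕ :=
  (l.take r ++ (l.drop (r + 1)).map (· - 1)).filter (fun x => x != 0)

/-- All special rim hook tabloids of the shape given by the weakly
decreasing list of row lengths, each tabloid recorded as the list of
`(size, height)` pairs of its special rim hooks, in order of removal
(always removing the hook containing the first-column cell of the
shortest remaining row). -/
def srhtsAux : ℕ → List ℕ → List (List (ℕ × ℕ))
  | 0, _ => [[]]
  | fuel + 1, l =>
      if l.length = 0 then [[]]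
      else
        (List.range l.length).flatMap fun r =>
          (srhtsAux fuel (srhtStep l r)).map fun T =>
            (l.getD r 0 + (l.length - 1 - r), l.length - 1 - r) :: T

def srhts (l : List ℕ) : List (List (ℕ × ℕ)) := srhtsAux l.length l

/-- The content of a special rim hook tabloid: its hook sizes sorted decreasingly. -/
def contList (T : List (ℕ × ℕ)) : List ℕ :=
  (((T.map Prod.fst : List ℕ) : Multiset ℕ).sort (· ≤ ·)).reverse

/-- The height of a special rim hook tabloid: the sum of the heights of its hooks. -/
def htT (T : List (ℕ × ℕ)) : ℕ := (T.map Prod.snd).sum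

/-- The staircase `(2n+k-1, 2n+k-3, ..., k+3)` of `n-1` parts. -/
def stairList (n k : ℕ) : List ℕ := (List.range (n - 1)).map fun i => 2 * n + k - 2 * i - 1

/-- The partition `ρ = (2n+k-1, 2n+k-3, ..., k+3, k-3, 2, 2)`. -/
def rhoList (n k : ℕ) : List ℕ := stairList n k ++ [k - 3, 2, 2]

/-- Sort a list of naturals decreasingly. -/
def sortD (l : List ℕ) : List ℕ := (((l : List ℕ) : Multiset ℕ).sort (· ≤ ·)).reverse

lemma srhtStep_ne_zero {l : List ℕ} {r : ℕ} : ∀ a ∈ srhtStep l r, a ≠ 0 := by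
  intro a ha
  simp only [srhtStep, List.mem_filter, bne_iff_ne, ne_eq] at ha
  exact ha.2
lemma srhtStep_length {l : List ℕ} {r : ℕ} (hr : r < l.length) :
    (srhtStep l r).length ≤ l.length - 1 := by
  have h1 := List.length_filter_le (fun x => x != 0)
      (l.take r ++ (l.drop (r + 1)).map (· - 1))
  simp only [List.length_append, List.length_take, List.length_map, List.length_drop] at h1
  simp only [srhtStep]
  omega
lemma srhtStep_cons {x : ℕ} (hx : x ≠ 0) (rest : List ℕ) (j : ℕ) :
    srhtStep (x :: rest) (j + 1) = x :: srhtStep rest j := by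
  simp [srhtStep, List.filter_cons, hx]
lemma srhtsAux_nil (fuel : ℕ) : srhtsAux fuel [] = [[]] := by
  cases fuel <;> simp [srhtsAux]

def badAux : ℕ → ℕ → List ℕ → List (List (ℕ × ℕ))
  | 0, _, _ => []
  | fuel + 1, x, rest =>
      if rest.length = 0 then []
      else
        ((srhtsAux fuel ((rest.map (· - 1)).filter (fun a => a != 0))).map
          (fun T => (x + rest.length, rest.length) :: T))
        ++ (List.range rest.length).flatMap fun j =>
            (badAux fuel x (srhtStep rest j)).map fun T =>
              (rest.getD j 0 + (rest.length - 1 - j), rest.length - 1 - j) :: T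

lemma badAux_big : ∀ fuel x rest, ∀ T ∈ badAux fuel x rest, ∃ p ∈ T, x < p.1 := by
  intro fuel
  induction fuel with
  | zero => simp [badAux]
  | succ fuel ih =>
      intro x rest T hT
      rw [badAux] at hT
      by_cases h : rest.length = 0
      · simp [h] at hT
      · rw [if_neg h, List.mem_append] at hT
        rcases hT with h1 | h2
        · simp only [List.mem_map] at h1
          obtain ⟨T', _, rfl⟩ := h1
          exact ⟨_, List.mem_cons_self, by simp; omega⟩
        · simp only [List.mem_flatMap, List.mem_map] at h2
          obtain ⟨j, hj, T', hT', rfl⟩ := h2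
          obtain ⟨p, hp, hx⟩ := ih x _ T' hT'
          exact ⟨p, List.mem_cons_of_mem _ hp, hx⟩

-- multiset helpers
lemma coe_flatMap {α β : Type*} (l : List α) (f : α → List β) :
    ((l.flatMap f : List β) : Multiset β) = (l.map fun a => ((f a : Multiset β))).sum := by
  induction l with
  | nil => simp
  | cons a l ih => simp [List.flatMap_cons, ih, ← Multiset.coe_add]

lemma sum_map_add {α : Type*} {β : Type*} [AddCommMonoid β] (l : List α) (f g : α → β) :
    (l.map fun a => f a + g a).sum = (l.map f).sum + (l.map g).sum := by
  induction l with
  | nil => simp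
  | cons a l ih => simp [ih]; abel

lemma map_sum_map {α β γ : Type*} (l : List α) (g : α → Multiset β) (f : β → γ) :
    Multiset.map f (l.map g).sum = (l.map fun a => Multiset.map f (g a)).sum := by
  induction l with
  | nil => simp
  | cons a l ih => simp [ih]

lemma split : ∀ fuel (rest : List ℕ) (x : ℕ), x ≠ 0 → (∀ a ∈ rest, a ≠ 0) →
    rest.length ≤ fuel →
    ((srhtsAux (fuel + 1) (x :: rest) : List (List (ℕ × ℕ))) : Multiset (List (ℕ × ℕ)))
      = Multiset.map (fun T => T ++ [(x, 0)]) (srhtsAux fuel rest)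
        + ((badAux (fuel + 1) x rest : List (List (ℕ × ℕ))) : Multiset (List (ℕ × ℕ))) := by
  intro fuel
  induction fuel with
  | zero =>
      intro rest x hx hr hlen
      have : rest = [] := List.length_eq_zero_iff.mp (Nat.le_zero.mp hlen)
      subst this
      simp [srhtsAux, srhtStep, badAux, show List.range 1 = [0] from rfl]
  | succ fuel ih =>
      intro rest x hx hr hlen
      rcases rest with _ | ⟨b, rest'⟩
      · simp [srhtsAux, srhtStep, srhtsAux_nil, badAux, show List.range 1 = [0] from rfl]
      · set rest := b :: rest' with hrest
        have hrlen : rest.length ≠ 0 := by simp [hrest]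
        -- unfold LHS
        rw [show (fuel + 1 + 1) = (fuel + 1) + 1 from rfl, srhtsAux]
        rw [if_neg (by simp [hrest])]
        rw [show (x :: rest).length = rest.length + 1 from rfl]
        rw [List.range_succ_eq_map, List.flatMap_cons, List.flatMap_map]
        -- abbreviations
        set L := rest.length with hL
        have hxr0 : srhtStep (x :: rest) 0 = (rest.map (· - 1)).filter (fun a => a != 0) := by
          simp [srhtStep]
        rw [← Multiset.coe_add, coe_flatMap]
        simp only [Nat.succ_eq_add_one, List.getD_cons_zero, List.getD_cons_succ,
          Nat.add_sub_cancel, Nat.sub_zero]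
        have hstep : ∀ a ∈ List.range L,
            ((List.map (fun T => (rest.getD a 0 + (L - (a + 1)), L - (a + 1)) :: T)
                (srhtsAux (fuel + 1) (srhtStep (x :: rest) (a + 1))) : List (List (ℕ × ℕ))) : Multiset (List (ℕ × ℕ)))
            = Multiset.map (fun T => T ++ [(x, 0)])
                (Multiset.map (fun T => (rest.getD a 0 + (L - (a + 1)), L - (a + 1)) :: T)
                  (srhtsAux fuel (srhtStep rest a)))
              + Multiset.map (fun T => (rest.getD a 0 + (L - (a + 1)), L - (a + 1)) :: T)
                  (badAux (fuel + 1) x (srhtStep rest a)) := by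
          intro a ha
          rw [srhtStep_cons hx]
          rw [← Multiset.map_coe, ih _ x hx (fun c hc => srhtStep_ne_zero c hc)
            (by have := srhtStep_length (l := rest) (r := a) (by simpa using ha); omega)]
          rw [Multiset.map_add]
          congr 1
          rw [Multiset.map_map, Multiset.map_map]
          rfl
        rw [List.map_congr_left hstep, sum_map_add]
        conv_rhs => rw [srhtsAux, badAux]
        rw [if_neg (by simp [hrest]), if_neg (by simp [hrest])]
        rw [coe_flatMap, map_sum_map, ← Multiset.coe_add, coe_flatMap, hxr0]
        have harith2 : ∀ a : ℕ, L - 1 - a = L - (a + 1) := by omega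
        simp only [harith2, ← Multiset.map_coe, ← hL]
        abel

lemma contList_eq (T : List (ℕ × ℕ)) : contList T = sortD (T.map Prod.fst) := rfl

lemma sortD_perm (l : List ℕ) : List.Perm (sortD l) l :=
  (List.reverse_perm _).trans (Multiset.coe_eq_coe.mp (Multiset.sort_eq (α := ℕ) ↑l (· ≤ ·)))

lemma sortD_sorted (l : List ℕ) : (sortD l).Pairwise (fun a b => b ≤ a) := by
  rw [sortD]
  exact List.pairwise_reverse.mpr (by simpa using Multiset.pairwise_sort (α := ℕ) ↑l (· ≤ ·))

lemma sortD_congr {l l' : List ℕ} (h : (l : Multiset ℕ) = (l' : Multiset ℕ)) :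
    sortD l = sortD l' := by rw [sortD, sortD, h]

lemma sortD_head_ge {l : List ℕ} {b : ℕ} {u : List ℕ} (h : sortD l = b :: u) :
    ∀ a ∈ l, a ≤ b := by
  intro a ha
  have ha' : a ∈ b :: u := h ▸ ((sortD_perm l).mem_iff.mpr ha)
  have hs := sortD_sorted l
  rw [h, List.pairwise_cons] at hs
  rcases List.mem_cons.mp ha' with rfl | hu
  · exact le_refl _
  · exact hs.1 a hu

lemma sortD_cons_max {x : ℕ} {l : List ℕ} (h : ∀ a ∈ l, a ≤ x) :
    sortD (x :: l) = x :: sortD l := by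
  haveI : Std.Antisymm (fun a b : ℕ => b ≤ a) := ⟨fun a b h1 h2 => le_antisymm h2 h1⟩
  have hperm : List.Perm (sortD (x :: l)) (x :: sortD l) :=
    (sortD_perm _).trans ((sortD_perm l).symm.cons x)
  refine List.Perm.eq_of_pairwise' (sortD_sorted _) ?_ hperm
  exact List.pairwise_cons.mpr ⟨fun a ha => h a ((sortD_perm l).subset ha), sortD_sorted l⟩

def tab6 (k : ℕ) : List (List (ℕ × ℕ)) :=
  [[(k - 1, 2), (2, 1)], [(k - 1, 2), (1, 0), (1, 0)], [(3, 1), (k - 2, 1)],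
   [(3, 1), (1, 0), (k - 3, 0)], [(2, 0), (k - 2, 1), (1, 0)], [(2, 0), (2, 0), (k - 3, 0)]]

lemma srhts_base (k : ℕ) (hk : 5 ≤ k) : srhts [k - 3, 2, 2] = tab6 k := by
  obtain ⟨a, ha⟩ : ∃ a, k - 3 = a + 2 := ⟨k - 5, by omega⟩
  have h1 : k - 1 = a + 4 := by omega
  have h2 : k - 2 = a + 3 := by omega
  rw [tab6, ha, h1, h2]
  simp [srhts, srhtsAux, srhtStep, show (3:ℕ) = 2 + 1 from rfl, List.range_succ]

lemma tab6_fst_lt {k x : ℕ} (hk : 5 ≤ k) (hx : k + 3 ≤ x) :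
    ∀ t ∈ tab6 k, ∀ p ∈ t, p.1 < x := by
  intro t ht p hp
  simp only [tab6, List.mem_cons, List.not_mem_nil, or_false] at ht
  rcases ht with rfl | rfl | rfl | rfl | rfl | rfl <;>
    (simp only [List.mem_cons, List.not_mem_nil, or_false] at hp) <;>
    (rcases hp with rfl | rfl | rfl <;> simp <;> omega)

lemma main (k : ℕ) (hk : 5 ≤ k) : ∀ s : List ℕ, s.Pairwise (· > ·) → (∀ a ∈ s, k + 3 ≤ a) →
    Multiset.filter (fun T => (contList T).take s.length = s)
        ((srhts (s ++ [k - 3, 2, 2]) : List (List (ℕ × ℕ))) : Multiset (List (ℕ × ℕ)))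
      = (((tab6 k).map (fun T => T ++ s.reverse.map (fun a => (a, 0)))) :
          List (List (ℕ × ℕ))) := by
  intro s
  induction s with
  | nil =>
      intro _ _
      rw [Multiset.filter_eq_self.mpr (by intro T _; simp)]
      simp [srhts_base k hk]
  | cons x s' ih =>
      intro hsort hbig
      have hx3 : k + 3 ≤ x := hbig x (List.mem_cons_self)
      have hx : x ≠ 0 := by omega
      have hxgt : ∀ a ∈ s', a < x := fun a ha => (List.pairwise_cons.mp hsort).1 a ha
      have hs'sort : s'.Pairwise (· > ·) := (List.pairwise_cons.mp hsort).2
      have hs'big : ∀ a ∈ s', k + 3 ≤ a := fun a ha => hbig a (List.mem_cons_of_mem _ ha)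
      set rest := s' ++ [k - 3, 2, 2] with hrest
      have hrpos : ∀ a ∈ rest, a ≠ 0 := by
        intro a ha
        rw [hrest, List.mem_append] at ha
        rcases ha with h | h
        · have := hs'big a h; omega
        · simp only [List.mem_cons, List.not_mem_nil, or_false] at h
          rcases h with rfl | rfl | rfl <;> omega
      have hshape : (x :: s') ++ [k - 3, 2, 2] = x :: rest := rfl
      rw [hshape]
      have hlen : srhts (x :: rest) = srhtsAux (rest.length + 1) (x :: rest) := rfl
      rw [hlen, split rest.length rest x hx hrpos le_rfl, Multiset.filter_add]
      -- the bad part is filtered out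
      have hbad : Multiset.filter (fun T => (contList T).take (x :: s').length = x :: s')
          ((badAux (rest.length + 1) x rest : List (List (ℕ × ℕ))) :
            Multiset (List (ℕ × ℕ))) = 0 := by
        rw [Multiset.filter_eq_nil]
        intro T hT hcontr
        obtain ⟨p, hp, hpx⟩ := badAux_big _ x rest T (by simpa using hT)
        have hmem : p.1 ∈ T.map Prod.fst := List.mem_map_of_mem hp
        have hne : sortD (T.map Prod.fst) ≠ [] := by
          intro h0
          rw [← (sortD_perm (T.map Prod.fst)).mem_iff, h0] at hmem
          exact List.not_mem_nil hmem
        obtain ⟨b, u, hbu⟩ := List.exists_cons_of_ne_nil hne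
        rw [contList_eq, hbu, List.length_cons, List.take_succ_cons] at hcontr
        have hb : b = x := (List.cons.injEq _ _ _ _ ▸ hcontr).1
        have := sortD_head_ge hbu p.1 hmem
        omega
      rw [hbad, add_zero]
      -- the good part
      rw [Multiset.filter_map]
      have hiff : ∀ T ∈ ((srhts rest : List (List (ℕ × ℕ))) : Multiset (List (ℕ × ℕ))),
          ((fun T => (contList T).take (x :: s').length = x :: s') ∘
            (fun T => T ++ [(x, 0)])) T ↔
          ((contList T).take s'.length = s' ∧ ∀ p ∈ T, p.1 < x) := by
        intro T hT
        have hC : contList (T ++ [(x, 0)]) = sortD (x :: T.map Prod.fst) := by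
          rw [contList_eq]
          refine sortD_congr ?_
          rw [List.map_append]
          exact Multiset.coe_eq_coe.mpr (List.perm_append_singleton _ _)
        simp only [Function.comp_apply, hC, List.length_cons]
        constructor
        · intro h
          -- head analysis
          have hne : sortD (x :: T.map Prod.fst) ≠ [] := by
            intro h0
            have : x ∈ x :: T.map Prod.fst := List.mem_cons_self
            rw [← (sortD_perm _).mem_iff, h0] at this
            exact List.not_mem_nil this
          obtain ⟨b, u, hbu⟩ := List.exists_cons_of_ne_nil hne
          have hble : ∀ c ∈ x :: T.map Prod.fst, c ≤ b := sortD_head_ge hbu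
          have hb : b = x := by
            rw [hbu, List.take_succ_cons] at h
            exact (List.cons.injEq _ _ _ _ ▸ h).1
          rw [hb] at hbu hble
          have hlt : ∀ p ∈ T, p.1 < x := by
            by_contra hcon
            push_neg at hcon
            obtain ⟨p, hp, hpge⟩ := hcon
            have hple : p.1 ≤ x := hble _ (List.mem_cons_of_mem _ (List.mem_map_of_mem hp))
            have hpeq : p.1 = x := le_antisymm hple hpge
            -- two copies of x
            have hcnt : 1 ≤ List.count x u := by
              have hperm := sortD_perm (x :: T.map Prod.fst)
              rw [hbu] at hperm
              have := hperm.count_eq x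
              rw [List.count_cons_self, List.count_cons_self] at this
              have hcmem : 0 < List.count x (T.map Prod.fst) :=
                List.count_pos_iff.mpr (hpeq ▸ List.mem_map_of_mem hp)
              omega
            have hxu : x ∈ u := List.count_pos_iff.mp (by omega)
            have hune : u ≠ [] := fun h0 => by rw [h0] at hxu; exact List.not_mem_nil hxu
            obtain ⟨b', u'', hbu'⟩ := List.exists_cons_of_ne_nil hune
            have hsorted := sortD_sorted (x :: T.map Prod.fst)
            rw [hbu, hbu', List.pairwise_cons] at hsorted
            have hb'x : x ≤ b' := by
              rcases List.mem_cons.mp (hbu' ▸ hxu) with rfl | hmem'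
              · exact le_refl _
              · exact (List.pairwise_cons.mp hsorted.2).1 x hmem'
            have hb'le : b' ≤ x := hble b' (by
              have : b' ∈ x :: u := by rw [hbu']; exact List.mem_cons_of_mem _ (List.mem_cons_self)
              have hperm := sortD_perm (x :: T.map Prod.fst)
              rw [hbu] at hperm
              exact hperm.subset (by rw [hbu']; exact List.mem_cons_of_mem _ (List.mem_cons_self)))
            have hb'eq : b' = x := le_antisymm hb'le hb'x
            -- now compare with s' which starts below x
            rcases s' with _ | ⟨a, s''⟩
            · -- s' = [] : impossible since T comes from srhts [k-3,2,2]
              have hT' : T ∈ tab6 k := by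
                rw [hrest] at hT
                simpa [srhts_base k hk] using hT
              exact absurd (tab6_fst_lt hk hx3 T hT' p hp) (by omega)
            · have ha : a < x := hxgt a (List.mem_cons_self)
              rw [hbu, hbu', List.take_succ_cons, List.length_cons, List.take_succ_cons] at h
              have := (List.cons.injEq _ _ _ _ ▸ h).2
              have : b' = a := (List.cons.injEq _ _ _ _ ▸ this).1
              omega
          refine ⟨?_, hlt⟩
          rw [sortD_cons_max (fun c hc => by
            obtain ⟨p, hp, rfl⟩ := List.mem_map.mp hc
            exact le_of_lt (hlt p hp)), List.take_succ_cons] at h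
          exact (List.cons.injEq _ _ _ _ ▸ h).2
        · intro ⟨h1, h2⟩
          rw [sortD_cons_max (fun c hc => by
            obtain ⟨p, hp, rfl⟩ := List.mem_map.mp hc
            exact le_of_lt (h2 p hp)), List.take_succ_cons, ← contList_eq, h1]
      rw [show srhtsAux rest.length rest = srhts rest from rfl]
      rw [Multiset.filter_congr hiff]
      rw [← Multiset.filter_filter, Multiset.filter_comm]
      rw [ih hs'sort hs'big]
      rw [Multiset.filter_eq_self.mpr ?_]
      · -- map over the coerced list
        rw [Multiset.map_coe, List.map_map]
        congr 1
        apply List.map_congr_left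
        intro t _
        simp only [Function.comp_apply, List.append_assoc, List.reverse_cons, List.map_append]
        rfl
      · intro T hT
        rw [Multiset.mem_coe, List.mem_map] at hT
        obtain ⟨t, ht, rfl⟩ := hT
        intro p hp
        rcases List.mem_append.mp hp with h | h
        · exact tab6_fst_lt hk hx3 t ht p h
        · obtain ⟨a, ha, rfl⟩ := List.mem_map.mp h
          exact hxgt a (List.mem_reverse.mp ha)

lemma stair_sorted (n k : ℕ) : (stairList n k).Pairwise (· > ·) := by
  rw [stairList, List.pairwise_map, List.pairwise_iff_getElem]
  intro i j hi hj hij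
  simp only [List.getElem_range]
  simp only [List.length_range] at hi hj
  omega

lemma stair_big (n k : ℕ) : ∀ a ∈ stairList n k, k + 3 ≤ a := by
  intro a ha
  rw [stairList, List.mem_map] at ha
  obtain ⟨i, hi, rfl⟩ := ha
  rw [List.mem_range] at hi
  omega

lemma contList_append_rev (t : List (ℕ × ℕ)) (s : List ℕ) :
    contList (t ++ s.reverse.map (fun a => (a, 0))) = sortD (s ++ t.map Prod.fst) := by
  rw [contList_eq]
  apply sortD_congr
  rw [List.map_append, List.map_map]
  have h : (s.reverse.map (Prod.fst ∘ fun a => (a, 0))) = s.reverse := by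
    rw [show (Prod.fst ∘ fun a : ℕ => ((a, 0) : ℕ × ℕ)) = id from rfl, List.map_id]
  rw [h, ← Multiset.coe_add, ← Multiset.coe_add, Multiset.coe_reverse]
  exact add_comm _ _

lemma htT_append_rev (t : List (ℕ × ℕ)) (s : List ℕ) :
    htT (t ++ s.reverse.map (fun a => (a, 0))) = htT t := by
  rw [htT, List.map_append, List.sum_append, List.map_map, htT]
  rw [show (Prod.snd ∘ fun a : ℕ => ((a, 0) : ℕ × ℕ)) = fun _ => 0 from rfl]
  induction s.reverse <;> simp [*]

lemma sortD_tail_congr (s : List ℕ) {A B : List ℕ} (h : List.Perm A B) :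
    sortD (s ++ A) = sortD (s ++ B) := by
  apply sortD_congr
  rw [← Multiset.coe_add, ← Multiset.coe_add, Multiset.coe_eq_coe.mpr h]

/-- For `k ≥ 5`, `n ≥ 2` and
`ρ = (2n+k-1, ..., k+3, k-3, 2, 2)`, there are exactly 6 special rim hook
tabloids of shape `ρ` whose content agrees with `ρ` in its first `n-1`
parts; their contents complete the staircase by
`(k-1,2), (k-1,1,1), (k-2,3), (k-2,2,1), (k-3,3,1), (k-3,2,2)` and their
heights are `3, 2, 2, 1, 1, 0` respectively. -/
theorem stmt_14 (n k : ℕ) (hn : 2 ≤ n) (hk : 5 ≤ k) :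
    ((srhts (rhoList n k)).filter fun T =>
        decide ((contList T).take (n - 1) = stairList n k)).length = 6 ∧
    (((srhts (rhoList n k)).filter fun T =>
        decide ((contList T).take (n - 1) = stairList n k)).map
          (fun T => (contList T, htT T)) : Multiset (List ℕ × ℕ)) =
      {(sortD (stairList n k ++ [k - 1, 2]), 3),
       (sortD (stairList n k ++ [k - 1, 1, 1]), 2),
       (sortD (stairList n k ++ [k - 2, 3]), 2),
       (sortD (stairList n k ++ [k - 2, 2, 1]), 1),
       (sortD (stairList n k ++ [k - 3, 3, 1]), 1),
       (sortD (stairList n k ++ [k - 3, 2, 2]), 0)} := by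
  set s := stairList n k with hs
  have hlen : n - 1 = s.length := by simp [hs, stairList]
  have hmain := main k hk s (stair_sorted n k) (stair_big n k)
  have hbridge : (((srhts (rhoList n k)).filter fun T =>
        decide ((contList T).take (n - 1) = stairList n k) : List (List (ℕ × ℕ))) :
          Multiset (List (ℕ × ℕ)))
      = Multiset.filter (fun T => (contList T).take s.length = s)
          ((srhts (s ++ [k - 3, 2, 2]) : List (List (ℕ × ℕ))) : Multiset (List (ℕ × ℕ))) := by
    rw [← hlen]
    rfl
  constructor
  · have h1 : ((srhts (rhoList n k)).filter fun T =>
        decide ((contList T).take (n - 1) = stairList n k)).length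
        = Multiset.card (((srhts (rhoList n k)).filter fun T =>
            decide ((contList T).take (n - 1) = stairList n k) : List (List (ℕ × ℕ))) :
              Multiset (List (ℕ × ℕ))) := rfl
    rw [h1, hbridge, hmain]
    simp [tab6]
  · rw [← Multiset.map_coe, hbridge, hmain, Multiset.map_coe, List.map_map, tab6]
    simp only [List.map_cons, List.map_nil, Function.comp_apply]
    rw [contList_append_rev, contList_append_rev, contList_append_rev,
        contList_append_rev, contList_append_rev, contList_append_rev,
        htT_append_rev, htT_append_rev, htT_append_rev,
        htT_append_rev, htT_append_rev, htT_append_rev]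
    simp only [List.map_cons, List.map_nil]
    rw [sortD_tail_congr s (List.Perm.refl [k-1, 2])]
    rw [sortD_tail_congr s (show List.Perm [3, k-2] [k-2, 3] from List.Perm.swap _ _ _)]
    rw [sortD_tail_congr s (show List.Perm [3, 1, k-3] [k-3, 3, 1] from
      List.perm_append_singleton _ [3, 1])]
    rw [sortD_tail_congr s (show List.Perm [2, k-2, 1] [k-2, 2, 1] from List.Perm.swap _ _ _)]
    rw [sortD_tail_congr s (show List.Perm [2, 2, k-3] [k-3, 2, 2] from
      List.perm_append_singleton _ [2, 2])]
    rw [show htT [(k-1,2),(2,1)] = 3 from rfl, show htT [(k-1,2),(1,0),(1,0)] = 2 from rfl,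
        show htT [(3,1),(k-2,1)] = 2 from rfl, show htT [(3,1),(1,0),(k-3,0)] = 1 from rfl,
        show htT [(2,0),(k-2,1),(1,0)] = 1 from rfl, show htT [(2,0),(2,0),(k-3,0)] = 0 from rfl]
    refine Eq.trans (Multiset.coe_eq_coe.mpr ?_) rfl
    exact List.Perm.cons _ (List.Perm.cons _ (List.Perm.cons _
      (List.Perm.swap _ _ _)))
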